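/- Assume the Hardy–Littlewood prime k-tuples conjecture: for every finite set H = {h_1, …, h_k} of positive integers with 𝔖(H) ≠ 0, the number of integers n ≤ x such that n + h_1, …, n + h_k are all prime is asymptotic to 𝔖(H) · x/(log x)^k as x → ∞. Then for every integer r ≥ 1 there exist infinitely many primes p with p_next − p = 2r; that is, every positive even number occurs infinitely often as a gap between consecutive primes. -/

import Mathlib

open Filter

/-- The smallest prime strictly greater than `p`. -/
noncomputable def nextPrime (p : ℕ) : ℕ := sInf {q : ℕ | q.Prime ∧ p < q}

/-- `ν_H(ℓ)`: the number of distinct residue classes modulo `ℓ` occupied by elements of `H`. -/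
def nu (H : Finset ℕ) (ℓ : ℕ) : ℕ := (H.image (fun h : ℕ => (h : ZMod ℓ))).card

/-- The number of `n ≤ x` such that `n + h` is prime for all `h ∈ H`. -/
noncomputable def tupleCount (x : ℝ) (H : Finset ℕ) : ℕ :=
  ((Finset.Icc 1 ⌊x⌋₊).filter (fun n => ∀ h ∈ H, (n + h).Prime)).card

/-- The Hardy–Littlewood prime `k`-tuples conjecture: for every finite set `H` of positive
integers whose singular series `𝔖(H)` (the limit `S` of the partial products) is nonzero,
the number of `n ≤ x` with `n + h` prime for all `h ∈ H` is asymptotic to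
`𝔖(H) · x / (log x)^{|H|}`. -/
def HardyLittlewood : Prop :=
  ∀ H : Finset ℕ, H.Nonempty → (∀ h ∈ H, 0 < h) →
    ∀ S : ℝ, Tendsto (fun X : ℕ =>
        ∏ ℓ ∈ (Finset.range (X + 1)).filter Nat.Prime,
          (1 - (nu H ℓ : ℝ) / (ℓ : ℝ)) * ((1 - (ℓ : ℝ)⁻¹) ^ H.card)⁻¹) atTop (nhds S) →
      S ≠ 0 →
      Tendsto (fun x : ℝ => (tupleCount x H : ℝ) * (Real.log x) ^ H.card / (S * x))
        atTop (nhds 1)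

section Aux

lemma prod_one_sub_ge (F : Finset ℕ) (f : ℕ → ℝ) (h0 : ∀ i ∈ F, 0 ≤ f i)
    (h1 : ∀ i ∈ F, f i ≤ 1) : 1 - ∑ i ∈ F, f i ≤ ∏ i ∈ F, (1 - f i) := by
  induction F using Finset.induction_on with
  | empty => simp
  | @insert a F hnotmem ih =>
    rw [Finset.sum_insert hnotmem, Finset.prod_insert hnotmem]
    have h0a := h0 a (Finset.mem_insert_self a F)
    have h1a := h1 a (Finset.mem_insert_self a F)
    have ihh := ih (fun i hi => h0 i (Finset.mem_insert_of_mem hi))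
      (fun i hi => h1 i (Finset.mem_insert_of_mem hi))
    have hs : (0:ℝ) ≤ ∑ i ∈ F, f i :=
      Finset.sum_nonneg (fun i hi => h0 i (Finset.mem_insert_of_mem hi))
    nlinarith

lemma tele_sum (N : ℕ) (hN : 13 ≤ N) (X : ℕ) :
    ∑ ℓ ∈ Finset.Ioc N X, (6:ℝ) / (((ℓ:ℝ) - 1) * ((ℓ:ℝ) - 2)) ≤ 12 / N := by
  have key : ∀ X : ℕ, ∑ ℓ ∈ Finset.Ioc N X, (6:ℝ) / (((ℓ:ℝ) - 1) * ((ℓ:ℝ) - 2))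
      ≤ 12 / N - 12 / (max N X) := by
    intro X
    induction X with
    | zero => simp [Finset.Ioc_eq_empty_of_le (Nat.zero_le N), Nat.le_zero]
    | succ X ih =>
      rcases le_or_gt (X+1) N with hle | hlt
      · rw [Finset.Ioc_eq_empty_of_le hle, max_eq_left hle]
        simp
      · have hNX : N ≤ X := Nat.lt_succ_iff.mp hlt
        rw [Finset.sum_Ioc_succ_top hNX]
        have hmax : max N X = X := max_eq_right hNX
        have hmax' : max N (X+1) = X+1 := max_eq_right (le_of_lt hlt)
        rw [hmax] at ih
        rw [hmax']
        have hX : (13:ℝ) ≤ (X:ℝ) := by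
          have := hN.trans hNX
          exact_mod_cast this
        have hstep : (6:ℝ) / ((((X:ℝ)+1) - 1) * (((X:ℝ)+1) - 2)) ≤ 12 / X - 12 / (X+1) := by
          rw [div_sub_div _ _ (by nlinarith) (by nlinarith : (X:ℝ)+1 ≠ 0)]
          rw [div_le_div_iff₀ (by nlinarith) (by nlinarith)]
          nlinarith
        push_cast
        linarith
  have := key X
  have h2 : (0:ℝ) ≤ 12 / (max N X) := by positivity
  linarith

lemma converge_prod (g : ℕ → ℝ) (N : ℕ) (hN : 13 ≤ N)
    (hpos : ∀ ℓ, ℓ.Prime → 0 < g ℓ)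
    (hub : ∀ ℓ, ℓ.Prime → N < ℓ → g ℓ ≤ 1)
    (hlb : ∀ ℓ, ℓ.Prime → N < ℓ → 1 - 6/(((ℓ:ℝ)-1)*((ℓ:ℝ)-2)) ≤ g ℓ) :
    ∃ S : ℝ, 0 < S ∧ Tendsto (fun X : ℕ =>
      ∏ ℓ ∈ (Finset.range (X+1)).filter Nat.Prime, g ℓ) atTop (nhds S) := by
  set f : ℕ → ℝ := fun ℓ => if ℓ.Prime then 1 - g ℓ else 0 with hf
  set t : ℕ → ℝ := fun X => ∏ ℓ ∈ Finset.Ioc N X, (1 - f ℓ) with ht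
  have hfprop : ∀ ℓ, N < ℓ → 0 ≤ f ℓ ∧ f ℓ ≤ 1 ∧ f ℓ ≤ 6/(((ℓ:ℝ)-1)*((ℓ:ℝ)-2)) := by
    intro ℓ hℓ
    have hℓ13 : (13:ℝ) < (ℓ:ℝ) := by exact_mod_cast hN.trans_lt hℓ
    have hden : (0:ℝ) < ((ℓ:ℝ)-1)*((ℓ:ℝ)-2) := by nlinarith
    by_cases hp : ℓ.Prime
    · simp only [hf, if_pos hp]
      refine ⟨by linarith [hub ℓ hp hℓ], by linarith [hpos ℓ hp], by linarith [hlb ℓ hp hℓ]⟩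
    · simp only [hf, if_neg hp]
      exact ⟨le_refl 0, zero_le_one, by positivity⟩
  have htlb : ∀ X, (1:ℝ)/13 ≤ t X := by
    intro X
    have h1 : 1 - ∑ ℓ ∈ Finset.Ioc N X, f ℓ ≤ t X :=
      prod_one_sub_ge _ _ (fun i hi => (hfprop i (Finset.mem_Ioc.mp hi).1).1)
        (fun i hi => (hfprop i (Finset.mem_Ioc.mp hi).1).2.1)
    have h2 : ∑ ℓ ∈ Finset.Ioc N X, f ℓ ≤ ∑ ℓ ∈ Finset.Ioc N X, (6:ℝ)/(((ℓ:ℝ)-1)*((ℓ:ℝ)-2)) :=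
      Finset.sum_le_sum (fun i hi => (hfprop i (Finset.mem_Ioc.mp hi).1).2.2)
    have h3 := tele_sum N hN X
    have hNr : (13:ℝ) ≤ (N:ℝ) := by exact_mod_cast hN
    have : (12:ℝ)/N ≤ 12/13 := by
      apply div_le_div_of_nonneg_left (by norm_num) (by norm_num) hNr
    linarith
  have hAnti : Antitone t := by
    apply antitone_nat_of_succ_le
    intro X
    rcases le_or_gt (X+1) N with hle | hlt
    · have h1 : Finset.Ioc N (X+1) = ∅ := Finset.Ioc_eq_empty_of_le hle
      have h2 : Finset.Ioc N X = ∅ := Finset.Ioc_eq_empty_of_le (le_trans (Nat.le_succ X) hle)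
      simp [ht, h1, h2]
    · have hNX : N ≤ X := Nat.lt_succ_iff.mp hlt
      have hexp : t (X+1) = t X * (1 - f (X+1)) := Finset.prod_Ioc_succ_top hNX _
      rw [hexp]
      have hfp := hfprop (X+1) hlt
      have : 0 ≤ t X := le_trans (by norm_num) (htlb X)
      nlinarith
  obtain ⟨T, hT⟩ : ∃ T, Tendsto t atTop (nhds T) :=
    ⟨_, tendsto_atTop_ciInf hAnti ⟨1/13, by rintro y ⟨X, rfl⟩; exact htlb X⟩⟩
  have hTpos : (0:ℝ) < T := by
    have : (1:ℝ)/13 ≤ T := ge_of_tendsto hT (Eventually.of_forall htlb)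
    linarith
  have haN : (0:ℝ) < ∏ ℓ ∈ (Finset.range (N+1)).filter Nat.Prime, g ℓ :=
    Finset.prod_pos (fun i hi => hpos i (Finset.mem_filter.mp hi).2)
  set aN := ∏ ℓ ∈ (Finset.range (N+1)).filter Nat.Prime, g ℓ with haNdef
  refine ⟨aN * T, by positivity, ?_⟩
  have key : ∀ X, N ≤ X → ∏ ℓ ∈ (Finset.range (X+1)).filter Nat.Prime, g ℓ = aN * t X := by
    intro X hX
    have hsplit : Finset.range (X+1) = Finset.range (N+1) ∪ Finset.Ioc N X := by
      ext a
      simp only [Finset.mem_range, Finset.mem_union, Finset.mem_Ioc]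
      omega
    have hdisj : Disjoint (Finset.range (N+1)) (Finset.Ioc N X) := by
      simp only [Finset.disjoint_left, Finset.mem_range, Finset.mem_Ioc]
      intro a ha ⟨ha2, _⟩; omega
    rw [hsplit, Finset.filter_union, Finset.prod_union (Finset.disjoint_filter_filter hdisj)]
    congr 1
    rw [Finset.prod_filter]
    apply Finset.prod_congr rfl
    intro ℓ hℓ
    by_cases hp : ℓ.Prime <;> simp [ht, hf, hp]
  have hlim : Tendsto (fun X => aN * t X) atTop (nhds (aN * T)) := hT.const_mul aN
  apply hlim.congr'
  filter_upwards [eventually_ge_atTop N] with X hX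
  exact (key X hX).symm

lemma nu_le (H : Finset ℕ) (ℓ : ℕ) (hp : ℓ.Prime) : nu H ℓ ≤ ℓ := by
  have : NeZero ℓ := ⟨hp.ne_zero⟩
  have := Finset.card_le_univ (H.image (fun h : ℕ => (h : ZMod ℓ)))
  simpa [nu, ZMod.card] using this

lemma nu_eq_card (H : Finset ℕ) (ℓ : ℕ) (hℓ : 0 < ℓ) (hbig : ∀ h ∈ H, h < ℓ) :
    nu H ℓ = H.card := by
  have : NeZero ℓ := ⟨hℓ.ne'⟩
  apply Finset.card_image_of_injOn
  intro a ha b hb hab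
  have ha' := hbig a ha
  have hb' := hbig b hb
  have := congrArg ZMod.val hab
  rwa [ZMod.val_natCast_of_lt ha', ZMod.val_natCast_of_lt hb'] at this

lemma bound2 (L : ℝ) (hL : 14 ≤ L) :
    1 - 6/((L-1)*(L-2)) ≤ (1 - 2/L)*((1-L⁻¹)^2)⁻¹ ∧ (1 - 2/L)*((1-L⁻¹)^2)⁻¹ ≤ 1 := by
  have h0 : (0:ℝ) < L := by linarith
  have h1 : (0:ℝ) < L - 1 := by linarith
  have h2 : (0:ℝ) < L - 2 := by linarith
  have e : (1 - 2/L)*((1-L⁻¹)^2)⁻¹ = (L*(L-2))/((L-1)^2) := by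
    rw [inv_eq_one_div]
    field_simp
  rw [e]
  constructor
  · rw [sub_le_iff_le_add, div_add_div _ _ (by positivity) (by positivity),
      le_div_iff₀ (by positivity)]
    nlinarith
  · rw [div_le_one (by positivity)]
    nlinarith

lemma bound3 (L : ℝ) (hL : 14 ≤ L) :
    1 - 6/((L-1)*(L-2)) ≤ (1 - 3/L)*((1-L⁻¹)^3)⁻¹ ∧ (1 - 3/L)*((1-L⁻¹)^3)⁻¹ ≤ 1 := by
  have h0 : (0:ℝ) < L := by linarith
  have h1 : (0:ℝ) < L - 1 := by linarith
  have h2 : (0:ℝ) < L - 2 := by linarith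
  have h3 : (0:ℝ) < L - 3 := by linarith
  have e : (1 - 3/L)*((1-L⁻¹)^3)⁻¹ = (L^2*(L-3))/((L-1)^3) := by
    rw [inv_eq_one_div]
    field_simp
  rw [e]
  constructor
  · rw [sub_le_iff_le_add, div_add_div _ _ (by positivity) (by positivity),
      le_div_iff₀ (by positivity)]
    nlinarith
  · rw [div_le_one (by positivity)]
    nlinarith

lemma exists_singular (H : Finset ℕ) (hcard : H.card = 2 ∨ H.card = 3)
    (hadm : ∀ ℓ, ℓ.Prime → nu H ℓ ≠ ℓ) :
    ∃ S : ℝ, 0 < S ∧ Tendsto (fun X : ℕ =>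
      ∏ ℓ ∈ (Finset.range (X+1)).filter Nat.Prime,
        (1 - (nu H ℓ : ℝ) / (ℓ : ℝ)) * ((1 - (ℓ : ℝ)⁻¹) ^ H.card)⁻¹) atTop (nhds S) := by
  set g : ℕ → ℝ := fun ℓ => (1 - (nu H ℓ : ℝ) / (ℓ : ℝ)) * ((1 - (ℓ : ℝ)⁻¹) ^ H.card)⁻¹ with hg
  apply converge_prod g (13 + H.sum id) (Nat.le_add_right 13 _)
  · intro ℓ hp
    have h2 : 2 ≤ ℓ := hp.two_le
    have hL : (2:ℝ) ≤ (ℓ:ℝ) := by exact_mod_cast h2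
    have hnu : nu H ℓ < ℓ := lt_of_le_of_ne (nu_le H ℓ hp) (hadm ℓ hp)
    have hnuR : (nu H ℓ : ℝ) < (ℓ:ℝ) := by exact_mod_cast hnu
    have h1 : (0:ℝ) < 1 - (nu H ℓ : ℝ) / (ℓ : ℝ) := by
      rw [sub_pos, div_lt_one (by linarith)]; exact hnuR
    have h3 : (0:ℝ) < 1 - (ℓ:ℝ)⁻¹ := by
      rw [sub_pos]
      have h4 : (ℓ:ℝ)⁻¹ ≤ 2⁻¹ := by
        apply inv_anti₀ <;> norm_num <;> linarith
      linarith [h4]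
    exact mul_pos h1 (by positivity)
  all_goals {
    intro ℓ hp hℓ
    have hbig : ∀ h ∈ H, h < ℓ := by
      intro h hh
      have : h ≤ H.sum id := Finset.single_le_sum (fun i _ => Nat.zero_le i) hh
      omega
    have hnu : nu H ℓ = H.card := nu_eq_card H ℓ hp.pos hbig
    have hL : (14:ℝ) ≤ (ℓ:ℝ) := by exact_mod_cast (by omega : 14 ≤ ℓ)
    rcases hcard with hc | hc <;>
      simp only [hg, hnu, hc] <;>
      first
        | (exact_mod_cast (bound2 (ℓ:ℝ) hL).2)
        | (exact_mod_cast (bound2 (ℓ:ℝ) hL).1)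
        | (exact_mod_cast (bound3 (ℓ:ℝ) hL).2)
        | (exact_mod_cast (bound3 (ℓ:ℝ) hL).1)
  }

lemma nu_le_card (H : Finset ℕ) (ℓ : ℕ) : nu H ℓ ≤ H.card := Finset.card_image_le

lemma inadmissible_count (H : Finset ℕ) (hH : ∀ h ∈ H, 0 < h) (hc : H.card ≤ 3)
    (ℓ : ℕ) (hp : ℓ.Prime) (hnu : nu H ℓ = ℓ) (x : ℝ) : tupleCount x H ≤ 2 := by
  have : NeZero ℓ := ⟨hp.ne_zero⟩
  have huniv : H.image (fun h : ℕ => (h : ZMod ℓ)) = Finset.univ := by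
    apply Finset.eq_univ_of_card
    rw [show (Finset.image (fun h : ℕ => (h : ZMod ℓ)) H).card = nu H ℓ from rfl, hnu, ZMod.card]
  have hsub : (Finset.Icc 1 ⌊x⌋₊).filter (fun n => ∀ h ∈ H, (n + h).Prime)
      ⊆ Finset.Icc 1 2 := by
    intro n hn
    rw [Finset.mem_filter, Finset.mem_Icc] at hn
    obtain ⟨⟨hn1, _⟩, hall⟩ := hn
    have hmem : (-(n:ZMod ℓ)) ∈ H.image (fun h : ℕ => (h : ZMod ℓ)) := by
      rw [huniv]; exact Finset.mem_univ _
    obtain ⟨h, hh, hcast⟩ := Finset.mem_image.mp hmem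
    have hdvd : ℓ ∣ n + h := by
      have : ((n + h : ℕ) : ZMod ℓ) = 0 := by push_cast [hcast]; ring
      exact (ZMod.natCast_eq_zero_iff _ _).mp this
    have hprime := hall h hh
    have heq : n + h = ℓ := ((Nat.prime_dvd_prime_iff_eq hp hprime).mp hdvd).symm
    have hℓ3 : ℓ ≤ 3 := by rw [← hnu]; exact le_trans (nu_le_card H ℓ) hc
    have := hH h hh
    rw [Finset.mem_Icc]
    omega
  calc tupleCount x H ≤ (Finset.Icc 1 2).card := Finset.card_le_card hsub
    _ = 2 := by simp

lemma log_sq_div_tendsto : Tendsto (fun x : ℝ => Real.log x ^ 2 / x) atTop (nhds 0) := by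
  have := Real.tendsto_pow_log_div_mul_add_atTop 1 0 2 one_ne_zero
  simpa using this

end Aux

/-- Assuming the Hardy–Littlewood conjecture, every positive even number `2r` occurs
infinitely often as a gap between consecutive primes. -/
theorem every_even_gap_of_HL (hHL : HardyLittlewood) (r : ℕ) (hr : 1 ≤ r) :
    {p : ℕ | p.Prime ∧ nextPrime p = p + 2 * r}.Infinite := by
  by_contra hinf
  rw [Set.not_infinite] at hinf
  -- the pair
  set H₂ : Finset ℕ := {1, 2*r+1} with hH₂
  have hcard₂ : H₂.card = 2 := by
    rw [hH₂, Finset.card_insert_of_notMem (by simp; omega), Finset.card_singleton]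
  have hne₂ : H₂.Nonempty := ⟨1, by simp [hH₂]⟩
  have hpos₂ : ∀ h ∈ H₂, 0 < h := by
    intro h hh
    rw [hH₂, Finset.mem_insert, Finset.mem_singleton] at hh
    rcases hh with rfl | rfl <;> omega
  have hadm₂ : ∀ ℓ, ℓ.Prime → nu H₂ ℓ ≠ ℓ := by
    intro ℓ hp
    rcases eq_or_ne ℓ 2 with rfl | hne
    · have h0 : ((2*r : ℕ) : ZMod 2) = 0 :=
        (ZMod.natCast_eq_zero_iff _ _).mpr ⟨r, rfl⟩
      have hcasteq : ((2*r+1 : ℕ) : ZMod 2) = ((1:ℕ) : ZMod 2) := by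
        have hsplit : ((2*r+1 : ℕ) : ZMod 2) = ((2*r : ℕ) : ZMod 2) + ((1:ℕ) : ZMod 2) := by
          push_cast; ring
        rw [hsplit, h0, zero_add]
      have h1 : nu H₂ 2 = 1 := by
        rw [hH₂]
        show (Finset.image (fun h : ℕ => (h : ZMod 2)) {1, 2*r+1}).card = 1
        rw [Finset.image_insert, Finset.image_singleton, hcasteq]
        simp
      omega
    · have h3 : 3 ≤ ℓ := by have := hp.two_le; omega
      have := nu_le_card H₂ ℓ
      omega
  obtain ⟨S₂, hS₂pos, hS₂⟩ := exists_singular H₂ (Or.inl hcard₂) hadm₂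
  have hHL₂ := hHL H₂ hne₂ hpos₂ S₂ hS₂ (ne_of_gt hS₂pos)
  rw [hcard₂] at hHL₂
  have T2 : Tendsto (fun x : ℝ => (tupleCount x H₂ : ℝ) * Real.log x ^ 2 / x)
      atTop (nhds S₂) := by
    have h := hHL₂.mul_const S₂
    rw [one_mul] at h
    apply h.congr'
    filter_upwards [eventually_ge_atTop (1:ℝ)] with x hx
    have hx0 : x ≠ 0 := by linarith
    field_simp
  -- the triples
  have key3 : ∀ h ∈ Finset.Icc 2 (2*r),
      Tendsto (fun x : ℝ => (tupleCount x ({1, h, 2*r+1} : Finset ℕ) : ℝ) * Real.log x ^ 2 / x)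
        atTop (nhds 0) := by
    intro h hh
    rw [Finset.mem_Icc] at hh
    obtain ⟨hh2, hh2r⟩ := hh
    set Ht : Finset ℕ := {1, h, 2*r+1} with hHt
    have hcard3 : Ht.card = 3 := by
      rw [hHt, Finset.card_insert_of_notMem (by simp; omega),
        Finset.card_insert_of_notMem (by simp; omega), Finset.card_singleton]
    have hpos3 : ∀ g ∈ Ht, 0 < g := by
      intro g hg
      rw [hHt, Finset.mem_insert, Finset.mem_insert, Finset.mem_singleton] at hg
      rcases hg with rfl | rfl | rfl <;> omega
    by_cases hbad : ∃ ℓ, ℓ.Prime ∧ nu Ht ℓ = ℓ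
    · obtain ⟨ℓ, hp, hℓ⟩ := hbad
      have hb := fun x : ℝ => inadmissible_count Ht hpos3 (le_of_eq hcard3) ℓ hp hℓ x
      have h2lim : Tendsto (fun x : ℝ => 2 * (Real.log x ^ 2 / x)) atTop (nhds 0) := by
        simpa using log_sq_div_tendsto.const_mul 2
      apply squeeze_zero' ?_ ?_ h2lim
      · filter_upwards [eventually_ge_atTop (1:ℝ)] with x hx
        positivity
      · filter_upwards [eventually_ge_atTop (1:ℝ)] with x hx
        have hcb : (tupleCount x Ht : ℝ) ≤ 2 := by exact_mod_cast hb x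
        rw [mul_div_assoc]
        apply mul_le_mul_of_nonneg_right hcb
        positivity
    · have hadm : ∀ ℓ, ℓ.Prime → nu Ht ℓ ≠ ℓ := by
        push_neg at hbad
        exact hbad
      obtain ⟨S₃, hS₃pos, hS₃⟩ := exists_singular Ht (Or.inr hcard3) hadm
      have hHL₃ := hHL Ht ⟨1, by simp [hHt]⟩ hpos3 S₃ hS₃ (ne_of_gt hS₃pos)
      rw [hcard3] at hHL₃
      have hlog : Tendsto (fun x : ℝ => S₃ * (Real.log x)⁻¹) atTop (nhds 0) := by
        simpa using (Real.tendsto_log_atTop.inv_tendsto_atTop).const_mul S₃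
      have hmul := hHL₃.mul hlog
      rw [mul_zero] at hmul
      apply hmul.congr'
      filter_upwards [eventually_ge_atTop (2:ℝ)] with x hx
      have hx0 : x ≠ 0 := by linarith
      have hlogx : Real.log x ≠ 0 := ne_of_gt (Real.log_pos (by linarith))
      have hS₃ne : S₃ ≠ 0 := ne_of_gt hS₃pos
      field_simp
  -- the finite exceptional set
  set Tf : Finset ℕ := hinf.toFinset.image (fun p => p - 1) with hTf
  -- counting inequality
  have hcount : ∀ x : ℝ, tupleCount x H₂ ≤
      (∑ h ∈ Finset.Icc 2 (2*r), tupleCount x ({1, h, 2*r+1} : Finset ℕ)) + Tf.card := by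
    intro x
    have hsub : (Finset.Icc 1 ⌊x⌋₊).filter (fun n => ∀ h ∈ H₂, (n+h).Prime) ⊆
        ((Finset.Icc 2 (2*r)).biUnion (fun h => (Finset.Icc 1 ⌊x⌋₊).filter
          (fun n => ∀ h' ∈ ({1, h, 2*r+1} : Finset ℕ), (n+h').Prime))) ∪ Tf := by
      intro n hn
      rw [Finset.mem_filter] at hn
      obtain ⟨hnI, hall⟩ := hn
      have hp1 : (n+1).Prime := hall 1 (by simp [hH₂])
      have hp2 : (n+(2*r+1)).Prime := hall (2*r+1) (by simp [hH₂])
      rw [Finset.mem_union]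
      by_cases hq : ∃ q, q.Prime ∧ n+1 < q ∧ q < n+(2*r+1)
      · left
        obtain ⟨q, hqp, hq1, hq2⟩ := hq
        rw [Finset.mem_biUnion]
        refine ⟨q - n, by rw [Finset.mem_Icc]; omega, ?_⟩
        rw [Finset.mem_filter]
        refine ⟨hnI, ?_⟩
        intro h' hh'
        rw [Finset.mem_insert, Finset.mem_insert, Finset.mem_singleton] at hh'
        rcases hh' with rfl | rfl | rfl
        · exact hp1
        · have heq : n + (q - n) = q := by omega
          rw [heq]; exact hqp
        · exact hp2
      · right
        push_neg at hq
        have hmem : (n+1) ∈ {p : ℕ | p.Prime ∧ nextPrime p = p + 2*r} := by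
          refine ⟨hp1, ?_⟩
          have hne : (n + (2*r+1)) ∈ {q : ℕ | q.Prime ∧ n+1 < q} := ⟨hp2, by omega⟩
          have hinfle : sInf {q : ℕ | q.Prime ∧ n+1 < q} ≤ n + (2*r+1) := Nat.sInf_le hne
          have hmem2 : sInf {q : ℕ | q.Prime ∧ n+1 < q} ∈ {q : ℕ | q.Prime ∧ n+1 < q} :=
            Nat.sInf_mem ⟨_, hne⟩
          obtain ⟨hsp, hsgt⟩ := hmem2
          have hge := hq _ hsp hsgt
          show sInf {q : ℕ | q.Prime ∧ n+1 < q} = (n+1) + 2*r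
          rw [show (n+1)+2*r = n+(2*r+1) by ring]
          exact le_antisymm hinfle hge
        rw [hTf, Finset.mem_image]
        exact ⟨n+1, (Set.Finite.mem_toFinset hinf).mpr hmem, by omega⟩
    calc tupleCount x H₂ ≤ _ := Finset.card_le_card hsub
      _ ≤ _ + Tf.card := Finset.card_union_le _ _
      _ ≤ _ := by
          exact Nat.add_le_add_right (Finset.card_biUnion_le) _
  -- the upper bound tends to 0
  have TR : Tendsto (fun x : ℝ =>
      (((∑ h ∈ Finset.Icc 2 (2*r), tupleCount x ({1, h, 2*r+1} : Finset ℕ)) + Tf.card : ℕ) : ℝ)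
        * Real.log x ^ 2 / x) atTop (nhds 0) := by
    have hsum : Tendsto (fun x : ℝ => ∑ h ∈ Finset.Icc 2 (2*r),
        (tupleCount x ({1, h, 2*r+1} : Finset ℕ) : ℝ) * Real.log x ^ 2 / x)
        atTop (nhds (∑ h ∈ Finset.Icc 2 (2*r), (0:ℝ))) :=
      tendsto_finset_sum _ key3
    rw [Finset.sum_const, smul_zero] at hsum
    have hC : Tendsto (fun x : ℝ => (Tf.card : ℝ) * (Real.log x ^ 2 / x)) atTop (nhds 0) := by
      simpa using log_sq_div_tendsto.const_mul (Tf.card : ℝ)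
    have hadd := hsum.add hC
    rw [add_zero] at hadd
    apply hadd.congr
    intro x
    push_cast
    rw [add_mul, add_div, Finset.sum_mul, Finset.sum_div, mul_div_assoc]
  -- conclude
  have hle : ∀ᶠ x : ℝ in atTop, (tupleCount x H₂ : ℝ) * Real.log x ^ 2 / x ≤
      (((∑ h ∈ Finset.Icc 2 (2*r), tupleCount x ({1, h, 2*r+1} : Finset ℕ)) + Tf.card : ℕ) : ℝ)
        * Real.log x ^ 2 / x := by
    filter_upwards [eventually_ge_atTop (1:ℝ)] with x hx
    have hc : (tupleCount x H₂ : ℝ) ≤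
        (((∑ h ∈ Finset.Icc 2 (2*r), tupleCount x ({1, h, 2*r+1} : Finset ℕ)) + Tf.card : ℕ) : ℝ) := by
      exact_mod_cast hcount x
    have hx0 : (0:ℝ) < x := by linarith
    gcongr
  have : S₂ ≤ 0 := le_of_tendsto_of_tendsto T2 TR hle
  linarith
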